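/- Let n ≥ 5. Every (5,8)-coloring of K_n is also a (4,4)-coloring; that is, every set of 4 vertices spans edges with at least 4 distinct colors (equivalently, every 4-vertex set has at most 2 color repetitions). -/

import Mathlib

/-- The number of distinct colors appearing on the (non-loop) edges of `K_n`
inside the vertex set `S`, under the edge-coloring `c`. -/
noncomputable def numColorsOn {n : ℕ} {C : Type*} (c : Sym2 (Fin n) → C) (S : Finset (Fin n)) : ℕ :=
  (c '' {e : Sym2 (Fin n) | e ∈ S.sym2 ∧ ¬ e.IsDiag}).ncard

/-- `c` is a `(p,q)`-coloring of `K_n`: every set of `p` vertices spans edges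
bearing at least `q` distinct colors. -/
def IsPQColoring (n p q : ℕ) {C : Type*} (c : Sym2 (Fin n) → C) : Prop :=
  ∀ S : Finset (Fin n), S.card = p → q ≤ numColorsOn c S

/-- For `n ≥ 5`, every `(5,8)`-coloring of `K_n` is also a `(4,4)`-coloring:
every set of `4` vertices spans edges with at least `4` distinct colors. -/
theorem five_eight_coloring_is_four_four (n : ℕ) (hn : 5 ≤ n) (C : Type)
    (c : Sym2 (Fin n) → C) (hc : IsPQColoring n 5 8 c) :
    IsPQColoring n 4 4 c := by
  intro S hS
  obtain ⟨v, hv⟩ : ∃ v, v ∉ S := by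
    by_contra h
    push_neg at h
    have hle : (Finset.univ : Finset (Fin n)).card ≤ S.card :=
      Finset.card_le_card (fun x _ => h x)
    simp only [Finset.card_univ, Fintype.card_fin, hS] at hle
    omega
  have hT : (insert v S).card = 5 := by
    rw [Finset.card_insert_of_notMem hv, hS]
  have h8 := hc (insert v S) hT
  set A : Set (Sym2 (Fin n)) := {e | e ∈ S.sym2 ∧ ¬ e.IsDiag} with hA
  set D : Set (Sym2 (Fin n)) := (fun u => s(v, u)) '' ↑S with hD
  have hsub : {e : Sym2 (Fin n) | e ∈ (insert v S).sym2 ∧ ¬ e.IsDiag} ⊆ A ∪ D := by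
    rintro e ⟨he, hd⟩
    induction e using Sym2.ind with
    | _ a b =>
      rw [Finset.mem_sym2_iff] at he
      have ha := he a (by simp)
      have hb := he b (by simp)
      simp only [Finset.mem_insert] at ha hb
      have hab : a ≠ b := by simpa using hd
      rcases ha with rfl | ha
      · rcases hb with rfl | hb
        · exact absurd rfl hab
        · exact Or.inr ⟨b, hb, rfl⟩
      · rcases hb with rfl | hb
        · exact Or.inr ⟨a, ha, Sym2.eq_swap⟩
        · refine Or.inl ⟨Finset.mem_sym2_iff.2 ?_, hd⟩
          rintro x hx
          rcases Sym2.mem_iff.1 hx with rfl | rfl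
          exacts [ha, hb]
  have hDcard : D.ncard ≤ 4 := by
    have h1 : D.ncard ≤ (↑S : Set (Fin n)).ncard := Set.ncard_image_le S.finite_toSet
    rwa [Set.ncard_coe_finset, hS] at h1
  have key : numColorsOn c (insert v S) ≤ numColorsOn c S + 4 := by
    unfold numColorsOn
    calc (c '' {e : Sym2 (Fin n) | e ∈ (insert v S).sym2 ∧ ¬ e.IsDiag}).ncard
        ≤ (c '' (A ∪ D)).ncard := by
          apply Set.ncard_le_ncard (Set.image_mono hsub) (Set.toFinite _)
      _ = (c '' A ∪ c '' D).ncard := by rw [Set.image_union]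
      _ ≤ (c '' A).ncard + (c '' D).ncard := Set.ncard_union_le _ _
      _ ≤ (c '' A).ncard + D.ncard := by
          exact Nat.add_le_add_left (Set.ncard_image_le (Set.toFinite _)) _
      _ ≤ (c '' A).ncard + 4 := Nat.add_le_add_left hDcard _
  omega
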